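/- Let m ≥ 2 and consider the two-stage instance with n = m, c = 0, A = 0, d = e (the all-ones vector of ℝ^m), uncertainty set U = conv({0, e₁, …, e_m, ν₁, …, ν_m}) where ν_i = (1/√m)(e − e_i), and matrix B ∈ ℝ^{m×m} with B_ii = 1 and B_ij = 1/√m for i ≠ j. Then z_Aff(B) ≥ ((m−1)/(6√m))·z_AR(B). -/

import Mathlib

open Matrix MeasureTheory ProbabilityTheory

/-- Optimal value of the two-stage adjustable robust problem. -/
noncomputable def zAR {m n : ℕ} (U : Set (Fin m → ℝ)) (c d : Fin n → ℝ)
    (A B : Matrix (Fin m) (Fin n) ℝ) : EReal :=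
  ⨅ x : {x : Fin n → ℝ // 0 ≤ x},
    ((c ⬝ᵥ (x : Fin n → ℝ) : ℝ) : EReal) +
      ⨆ h : U,
        ⨅ _y : {y : Fin n → ℝ // 0 ≤ y ∧
            (h : Fin m → ℝ) ≤ A *ᵥ (x : Fin n → ℝ) + B *ᵥ y},
          ((d ⬝ᵥ (_y : Fin n → ℝ) : ℝ) : EReal)

/-- Optimal value of the affine-policy problem. -/
noncomputable def zAff {m n : ℕ} (U : Set (Fin m → ℝ)) (c d : Fin n → ℝ)
    (A B : Matrix (Fin m) (Fin n) ℝ) : EReal :=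
  ⨅ p : {p : (Fin n → ℝ) × Matrix (Fin n) (Fin m) ℝ × (Fin n → ℝ) //
      0 ≤ p.1 ∧ ∀ h ∈ U, 0 ≤ p.2.1 *ᵥ h + p.2.2 ∧
        h ≤ A *ᵥ p.1 + B *ᵥ (p.2.1 *ᵥ h + p.2.2)},
    ((c ⬝ᵥ p.1.1 : ℝ) : EReal) +
      ⨆ h : U, ((d ⬝ᵥ (p.1.2.1 *ᵥ (h : Fin m → ℝ) + p.1.2.2) : ℝ) : EReal)

/-- The polyhedral uncertainty set. -/
def polyU {m L : ℕ} (R : Matrix (Fin L) (Fin m) ℝ) (r : Fin L → ℝ) : Set (Fin m → ℝ) :=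
  {h | 0 ≤ h ∧ R *ᵥ h ≤ r}

/-- The dualized uncertainty set. -/
def dualW {m n : ℕ} (B : Matrix (Fin m) (Fin n) ℝ) (d : Fin n → ℝ) : Set (Fin m → ℝ) :=
  {w | 0 ≤ w ∧ Bᵀ *ᵥ w ≤ d}

/-- Optimal value of the dualized adjustable robust problem. -/
noncomputable def zdAR {m n L : ℕ} (c d : Fin n → ℝ) (A B : Matrix (Fin m) (Fin n) ℝ)
    (R : Matrix (Fin L) (Fin m) ℝ) (r : Fin L → ℝ) : EReal :=
  ⨅ x : {x : Fin n → ℝ // 0 ≤ x},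
    ((c ⬝ᵥ (x : Fin n → ℝ) : ℝ) : EReal) +
      ⨆ w : dualW B d,
        ⨅ l : {l : Fin L → ℝ // 0 ≤ l ∧ (w : Fin m → ℝ) ≤ Rᵀ *ᵥ l},
          ((-(A *ᵥ (x : Fin n → ℝ)) ⬝ᵥ (w : Fin m → ℝ) + r ⬝ᵥ (l : Fin L → ℝ) : ℝ) : EReal)

/-- Optimal value of the dualized affine-policy problem. -/
noncomputable def zdAff {m n L : ℕ} (c d : Fin n → ℝ) (A B : Matrix (Fin m) (Fin n) ℝ)
    (R : Matrix (Fin L) (Fin m) ℝ) (r : Fin L → ℝ) : EReal :=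
  ⨅ p : {p : (Fin n → ℝ) × Matrix (Fin L) (Fin m) ℝ × (Fin L → ℝ) //
      0 ≤ p.1 ∧ ∀ w ∈ dualW B d, 0 ≤ p.2.1 *ᵥ w + p.2.2 ∧
        w ≤ Rᵀ *ᵥ (p.2.1 *ᵥ w + p.2.2)},
    ((c ⬝ᵥ p.1.1 : ℝ) : EReal) +
      ⨆ w : dualW B d,
        ((-(A *ᵥ p.1.1) ⬝ᵥ (w : Fin m → ℝ) + r ⬝ᵥ (p.1.2.1 *ᵥ (w : Fin m → ℝ) + p.1.2.2) : ℝ) : EReal)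
/-- The uncertainty set of the worst-case instance:
`U = conv{0, e₁, …, e_m, ν₁, …, ν_m}` with `νᵢ = (1/√m)(e - eᵢ)`. -/
noncomputable def badU (m : ℕ) : Set (Fin m → ℝ) :=
  convexHull ℝ (insert 0
    (Set.range (fun i : Fin m => (Pi.single i 1 : Fin m → ℝ)) ∪
      Set.range (fun i : Fin m => (Real.sqrt m)⁻¹ • ((1 : Fin m → ℝ) - Pi.single i 1))))

/-- The worst-case recourse matrix: `B_ii = 1`, `B_ij = 1/√m` for `i ≠ j`. -/
noncomputable def badB (m : ℕ) : Matrix (Fin m) (Fin m) ℝ :=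
  Matrix.of fun i j => if i = j then (1 : ℝ) else 1 / Real.sqrt m


open Finset in
lemma badB_mulVec_apply (m : ℕ) (v : Fin m → ℝ) (i : Fin m) :
    (badB m *ᵥ v) i = v i + (Real.sqrt m)⁻¹ * ((∑ j, v j) - v i) := by
  have h : (badB m *ᵥ v) i = ∑ j, (if i = j then (1:ℝ) else 1 / Real.sqrt m) * v j := by
    simp [badB, Matrix.mulVec, dotProduct]
  rw [h]
  have h2 : ∀ j : Fin m, (if i = j then (1:ℝ) else 1 / Real.sqrt m) * v j
      = (Real.sqrt m)⁻¹ * v j + (if i = j then (1 - (Real.sqrt m)⁻¹) * v j else 0) := by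
    intro j; split_ifs with h <;> simp [one_div] <;> ring
  rw [Finset.sum_congr rfl (fun j _ => h2 j), Finset.sum_add_distrib, Finset.sum_ite_eq,
    ← Finset.mul_sum]
  simp; ring

lemma zero_mem_badU (m : ℕ) : (0 : Fin m → ℝ) ∈ badU m :=
  subset_convexHull ℝ _ (Set.mem_insert _ _)

lemma single_mem_badU (m : ℕ) (i : Fin m) : (Pi.single i 1 : Fin m → ℝ) ∈ badU m :=
  subset_convexHull ℝ _ (Set.mem_insert_of_mem _ (Or.inl ⟨i, rfl⟩))

lemma nu_mem_badU (m : ℕ) (i : Fin m) :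
    (Real.sqrt m)⁻¹ • ((1 : Fin m → ℝ) - Pi.single i 1) ∈ badU m :=
  subset_convexHull ℝ _ (Set.mem_insert_of_mem _ (Or.inr ⟨i, rfl⟩))

lemma ratio_le_zAff (m : ℕ) (hm : 2 ≤ m) :
    ((((m : ℝ) - 1) / (6 * Real.sqrt m) : ℝ) : EReal) ≤
      zAff (badU m) (0 : Fin m → ℝ) (fun _ => (1 : ℝ)) 0 (badB m) := by
  have hm2 : (2:ℝ) ≤ (m:ℝ) := by exact_mod_cast hm
  have hs0 : (0:ℝ) < Real.sqrt m := Real.sqrt_pos.2 (by positivity)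
  have hs1 : (1:ℝ) ≤ Real.sqrt m := by
    rw [show (1:ℝ) = Real.sqrt 1 by simp]
    exact Real.sqrt_le_sqrt (by linarith)
  set s : ℝ := Real.sqrt m with hsdef
  have hss : s * s = (m:ℝ) := Real.mul_self_sqrt (by positivity)
  set Z : ℝ := ((m:ℝ) - 1) / (6 * s) with hZdef
  refine le_iInf fun p => ?_
  obtain ⟨⟨x, P, q⟩, hx, hfeas⟩ := p
  simp only [zero_dotProduct, EReal.coe_zero, zero_add]
  by_contra hT
  push_neg at hT
  -- every achieved value is < Z
  have hval : ∀ h ∈ badU m, (∑ k, (P *ᵥ h + q) k) < Z := by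
    intro h hh
    have h1 : (((fun _ => (1:ℝ)) ⬝ᵥ (P *ᵥ h + q) : ℝ) : EReal) ≤
        ⨆ h : badU m, (((fun _ => (1:ℝ)) ⬝ᵥ (P *ᵥ (h : Fin m → ℝ) + q) : ℝ) : EReal) :=
      le_iSup (fun h : badU m => (((fun _ => (1:ℝ)) ⬝ᵥ (P *ᵥ (h : Fin m → ℝ) + q) : ℝ) : EReal))
        ⟨h, hh⟩
    have h2 := lt_of_le_of_lt h1 hT
    rw [EReal.coe_lt_coe_iff] at h2
    simpa [dotProduct] using h2
  -- feasibility facts, with A = 0 simplified away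
  have hfeas' : ∀ h ∈ badU m, 0 ≤ P *ᵥ h + q ∧ h ≤ badB m *ᵥ (P *ᵥ h + q) := by
    intro h hh
    obtain ⟨h1, h2⟩ := hfeas h hh
    refine ⟨h1, ?_⟩
    rwa [Matrix.zero_mulVec, zero_add] at h2
  -- abbreviations
  set SS : ℝ := ∑ k, ∑ j, P k j with hSS
  set tr : ℝ := ∑ k : Fin m, P k k with htr
  set Q : ℝ := ∑ k, q k with hQ
  -- pointwise evaluation lemmas
  have hYk : ∀ i k, (P *ᵥ Pi.single i 1 + q) k = P k i + q k := by
    intro i k; simp [Matrix.mulVec_single]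
  have hNk : ∀ i k, (P *ᵥ (s⁻¹ • ((1 : Fin m → ℝ) - Pi.single i 1)) + q) k
      = s⁻¹ * ((∑ j, P k j) - P k i) + q k := by
    intro i k
    rw [Matrix.mulVec_smul, Matrix.mulVec_sub]
    simp [Matrix.mulVec_single, Matrix.mulVec, dotProduct]
  -- per-index facts
  have F1 : ∀ i : Fin m, 0 ≤ P i i + q i := by
    intro i
    have := (hfeas' _ (single_mem_badU m i)).1 i
    rwa [hYk i i] at this
  have F3 : ∀ i : Fin m, 0 ≤ s⁻¹ * ((∑ j, P i j) - P i i) + q i := by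
    intro i
    have := (hfeas' _ (nu_mem_badU m i)).1 i
    rwa [hNk i i] at this
  have sumY : ∀ i : Fin m, ∑ k, (P *ᵥ Pi.single i 1 + q) k = (∑ k, P k i) + Q := by
    intro i
    rw [Finset.sum_congr rfl fun k _ => hYk i k, Finset.sum_add_distrib]
  have F4 : ∀ i : Fin m, (∑ k, P k i) + Q < Z := by
    intro i
    have := hval _ (single_mem_badU m i)
    rwa [sumY i] at this
  have F5 : ∀ i : Fin m, s⁻¹ * (SS - ∑ k, P k i) + Q < Z := by
    intro i
    have h := hval _ (nu_mem_badU m i)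
    rw [Finset.sum_congr rfl fun k _ => hNk i k, Finset.sum_add_distrib] at h
    have : ∑ k, s⁻¹ * ((∑ j, P k j) - P k i) = s⁻¹ * (SS - ∑ k, P k i) := by
      rw [← Finset.mul_sum, Finset.sum_sub_distrib]
    rwa [this] at h
  have F6 : Q < Z := by
    have := hval _ (zero_mem_badU m)
    simpa [Matrix.mulVec_zero, hQ] using this
  have F2 : ∀ i : Fin m, 1 ≤ (P i i + q i) + s⁻¹ * (((∑ k, P k i) + Q) - (P i i + q i)) := by
    intro i
    have h := (hfeas' _ (single_mem_badU m i)).2 i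
    rw [badB_mulVec_apply, sumY i, hYk i i] at h
    simpa using h
  -- aggregate facts
  have hSC : ∑ i : Fin m, ∑ k, P k i = SS := Finset.sum_comm
  have S3' : 0 ≤ (SS - tr) + s * Q := by
    have h := Finset.sum_nonneg fun i (_ : i ∈ Finset.univ) => F3 i
    rw [Finset.sum_add_distrib, ← Finset.mul_sum, Finset.sum_sub_distrib] at h
    have h2 := mul_le_mul_of_nonneg_left h hs0.le
    rw [mul_zero, mul_add, ← mul_assoc, mul_inv_cancel₀ hs0.ne', one_mul] at h2
    linarith
  have S4 : SS + m * Q ≤ m * Z := by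
    have h := Finset.sum_le_sum fun i (_ : i ∈ Finset.univ) => (F4 i).le
    rw [Finset.sum_add_distrib, hSC] at h
    simpa [Finset.sum_const, Finset.card_univ, nsmul_eq_mul] using h
  have S5' : (m - 1) * SS + s * (m * Q) ≤ s * (m * Z) := by
    have h := Finset.sum_le_sum fun i (_ : i ∈ Finset.univ) => (F5 i).le
    rw [Finset.sum_add_distrib, ← Finset.mul_sum, Finset.sum_sub_distrib, hSC] at h
    simp only [Finset.sum_const, Finset.card_univ, Fintype.card_fin, nsmul_eq_mul] at h
    have h2 := mul_le_mul_of_nonneg_left h hs0.le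
    rw [mul_add, ← mul_assoc, mul_inv_cancel₀ hs0.ne', one_mul] at h2
    nlinarith [h2]
  have G : ∀ i : Fin m, 1 - s⁻¹ * ((∑ k, P k i) + Q) ≤ P i i + q i := by
    intro i
    have h2 := F2 i
    have h1 := F1 i
    linarith [h2, mul_nonneg (inv_nonneg.2 hs0.le) h1]
  have SG' : s * (m:ℝ) - (SS + m * Q) ≤ s * (tr + Q) := by
    have h := Finset.sum_le_sum fun i (_ : i ∈ Finset.univ) => G i
    rw [Finset.sum_sub_distrib, ← Finset.mul_sum, Finset.sum_add_distrib, hSC] at h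
    simp only [Finset.sum_const, Finset.card_univ, Fintype.card_fin, nsmul_eq_mul, mul_one] at h
    have hsum : ∑ i : Fin m, (P i i + q i) = tr + Q := by
      rw [Finset.sum_add_distrib]
    rw [hsum] at h
    have h2 := mul_le_mul_of_nonneg_left h hs0.le
    have h3 : s * ((m:ℝ) - s⁻¹ * (SS + (m:ℝ) * Q)) = s * (m:ℝ) - (SS + (m:ℝ) * Q) := by
      rw [mul_sub, ← mul_assoc, mul_inv_cancel₀ hs0.ne', one_mul]
    rw [h3] at h2
    exact h2
  -- final contradiction
  have hZ6 : 6 * s * Z = (m:ℝ) - 1 := by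
    rw [hZdef]; field_simp
  have hm0 : (0:ℝ) ≤ (m:ℝ) := by positivity
  have I1 : (m:ℝ) * tr - SS ≤ s * ((m:ℝ) * Z) := by
    linarith [S5', mul_le_mul_of_nonneg_left S3' hm0]
  have I2 := mul_le_mul_of_nonneg_left I1 hs0.le
  have e2 : s * (s * ((m:ℝ) * Z)) = (m:ℝ) * ((m:ℝ) * Z) := by rw [← mul_assoc, hss]
  have I3 := mul_le_mul_of_nonneg_left SG' hm0
  have I4 := mul_le_mul_of_nonneg_left S4 (by positivity : (0:ℝ) ≤ (m:ℝ) + s)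
  have I5 : s * ((m:ℝ) * (m:ℝ)) ≤ 2 * ((m:ℝ) * (m:ℝ)) * Z + s * ((m:ℝ) * Z) := by
    linarith [I2, e2, I3, I4]
  have J := mul_le_mul_of_nonneg_left I5 (by positivity : (0:ℝ) ≤ 6 * s)
  have K1 : 6 * s * (2 * ((m:ℝ) * (m:ℝ)) * Z) = 2 * ((m:ℝ) * (m:ℝ)) * ((m:ℝ) - 1) := by
    linear_combination (2 * (m:ℝ) * (m:ℝ)) * hZ6
  have K2 : 6 * s * (s * ((m:ℝ) * Z)) = s * (m:ℝ) * ((m:ℝ) - 1) := by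
    linear_combination (s * (m:ℝ)) * hZ6
  have K3 : 6 * s * (s * ((m:ℝ) * (m:ℝ))) = 6 * (m:ℝ) * ((m:ℝ) * (m:ℝ)) := by
    linear_combination (6 * (m:ℝ) * (m:ℝ)) * hss
  have hsm : s ≤ (m:ℝ) := by
    calc s = s * 1 := (mul_one s).symm
      _ ≤ s * s := mul_le_mul_of_nonneg_left hs1 hs0.le
      _ = (m:ℝ) := hss
  have hsmm : s * (m:ℝ) * ((m:ℝ) - 1) ≤ (m:ℝ) * (m:ℝ) * ((m:ℝ) - 1) := by
    refine mul_le_mul_of_nonneg_right ?_ (by linarith)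
    exact mul_le_mul_of_nonneg_right hsm hm0
  have hmp : (0:ℝ) < (m:ℝ) := by positivity
  linarith [J, K1, K2, K3, hsmm, mul_pos (mul_pos hmp hmp) hmp, mul_pos hmp hmp]

open Finset in
lemma exists_response (m : ℕ) (hm : 2 ≤ m) :
    ∀ h ∈ badU m, ∃ y : Fin m → ℝ, 0 ≤ y ∧ h ≤ badB m *ᵥ y ∧ ∑ k, y k ≤ 1 := by
  have hs0 : (0:ℝ) < Real.sqrt m := Real.sqrt_pos.2 (by positivity)
  have hs1 : (1:ℝ) ≤ Real.sqrt m := by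
    rw [show (1:ℝ) = Real.sqrt 1 by simp]
    exact Real.sqrt_le_sqrt (by exact_mod_cast Nat.one_le_of_lt hm)
  set s := Real.sqrt m with hs
  set D : Set (Fin m → ℝ) :=
    {h | ∃ y : Fin m → ℝ, 0 ≤ y ∧ h ≤ badB m *ᵥ y ∧ ∑ k, y k ≤ 1} with hD
  have hconv : Convex ℝ D := by
    rintro h₁ ⟨y₁, hy₁0, hy₁c, hy₁s⟩ h₂ ⟨y₂, hy₂0, hy₂c, hy₂s⟩ a b ha hb hab
    refine ⟨a • y₁ + b • y₂, ?_, ?_, ?_⟩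
    · exact add_nonneg (smul_nonneg ha hy₁0) (smul_nonneg hb hy₂0)
    · rw [Matrix.mulVec_add, Matrix.mulVec_smul, Matrix.mulVec_smul]
      exact add_le_add (smul_le_smul_of_nonneg_left hy₁c ha)
        (smul_le_smul_of_nonneg_left hy₂c hb)
    · have : ∑ k, (a • y₁ + b • y₂) k = a * ∑ k, y₁ k + b * ∑ k, y₂ k := by
        simp [Finset.mul_sum, Finset.sum_add_distrib]
      rw [this]
      calc a * ∑ k, y₁ k + b * ∑ k, y₂ k ≤ a * 1 + b * 1 :=
            add_le_add (mul_le_mul_of_nonneg_left hy₁s ha) (mul_le_mul_of_nonneg_left hy₂s hb)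
        _ = 1 := by rw [mul_one, mul_one, hab]
  intro h hh
  refine convexHull_min ?_ hconv hh
  rintro x (rfl | (⟨i, rfl⟩ | ⟨i, rfl⟩))
  · exact ⟨0, le_refl _, by simp [Matrix.mulVec_zero], by simp⟩
  · beta_reduce
    refine ⟨Pi.single i 1, ?_, ?_, ?_⟩
    · intro k; by_cases hk : k = i <;> simp [hk, Pi.single_apply]
    · intro k
      rw [badB_mulVec_apply]
      have hsum : ∑ j, (Pi.single i 1 : Fin m → ℝ) j = 1 := by simp
      rw [hsum]
      rcases eq_or_ne k i with hk | hk
      · subst hk; simp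
      · rw [Pi.single_eq_of_ne hk]
        have h1 : (0:ℝ) ≤ s⁻¹ * (1 - 0) := by positivity
        linarith
    · simp
  · beta_reduce
    have hm2 : (2:ℝ) ≤ m := by exact_mod_cast hm
    have ht : (0:ℝ) < s + m - 1 := by nlinarith
    refine ⟨(s + m - 1)⁻¹ • (1 : Fin m → ℝ), ?_, ?_, ?_⟩
    · intro k
      simp only [Pi.smul_apply, Pi.one_apply, smul_eq_mul, mul_one, Pi.zero_apply]
      exact inv_nonneg.2 ht.le
    · intro k
      rw [badB_mulVec_apply]
      have hsum : ∑ j, ((s + m - 1)⁻¹ • (1 : Fin m → ℝ)) j = (s + m - 1)⁻¹ * m := by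
        simp [Finset.mul_sum]; ring
      rw [hsum]
      have hrhs : ((s + m - 1)⁻¹ • (1 : Fin m → ℝ)) k
            + s⁻¹ * ((s + m - 1)⁻¹ * m - ((s + m - 1)⁻¹ • (1 : Fin m → ℝ)) k) = s⁻¹ := by
        simp only [Pi.smul_apply, Pi.one_apply, smul_eq_mul, mul_one]
        field_simp
        nlinarith [Real.sq_sqrt (by positivity : (0:ℝ) ≤ (m:ℝ))]
      rw [hrhs]
      simp only [Pi.smul_apply, Pi.sub_apply, Pi.one_apply, smul_eq_mul]
      rcases eq_or_ne k i with hk | hk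
      · subst hk; simp; exact hs0.le
      · rw [Pi.single_eq_of_ne hk]
        simp; exact le_rfl
    · have : ∑ k, ((s + m - 1)⁻¹ • (1 : Fin m → ℝ)) k = (s + m - 1)⁻¹ * m := by
        simp [Finset.mul_sum]; ring
      rw [this, inv_mul_le_iff₀ ht]
      linarith

open Finset in
lemma zAR_le_one (m : ℕ) (hm : 2 ≤ m) :
    zAR (badU m) (0 : Fin m → ℝ) (fun _ => (1 : ℝ)) 0 (badB m) ≤ 1 := by
  refine le_trans (iInf_le _ ⟨0, le_refl _⟩) ?_
  have hc : ((0 : Fin m → ℝ) ⬝ᵥ (0 : Fin m → ℝ) : ℝ) = 0 := by simp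
  rw [hc]
  simp only [EReal.coe_zero, zero_add]
  refine iSup_le fun h => ?_
  obtain ⟨y, hy0, hyc, hys⟩ := exists_response m hm h h.2
  have hfeas : 0 ≤ y ∧ (h : Fin m → ℝ) ≤
      (0 : Matrix (Fin m) (Fin m) ℝ) *ᵥ (0 : Fin m → ℝ) + badB m *ᵥ y := by
    refine ⟨hy0, ?_⟩
    rw [Matrix.zero_mulVec, zero_add]; exact hyc
  refine le_trans (iInf_le _ ⟨y, hfeas⟩) ?_
  have h1 : ((fun _ => (1:ℝ)) ⬝ᵥ y : ℝ) ≤ 1 := by simpa [dotProduct] using hys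
  exact_mod_cast h1

open Finset in
lemma zAR_nonneg (m : ℕ) :
    (0 : EReal) ≤ zAR (badU m) (0 : Fin m → ℝ) (fun _ => (1 : ℝ)) 0 (badB m) := by
  refine le_iInf fun x => ?_
  have hc : ((0 : Fin m → ℝ) ⬝ᵥ (x : Fin m → ℝ) : ℝ) = 0 := by simp
  rw [hc]
  simp only [EReal.coe_zero, zero_add]
  refine le_trans ?_ (le_iSup _ (⟨0, zero_mem_badU m⟩ : badU m))
  refine le_iInf fun y => ?_
  have h0 : (0:ℝ) ≤ (fun _ => (1:ℝ)) ⬝ᵥ (y : Fin m → ℝ) := by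
    simpa [dotProduct] using Finset.sum_nonneg fun k _ => y.2.1 k
  exact_mod_cast h0

/-- For the deterministic worst-case instance, the affine policy value is at
least `(m-1)/(6√m)` times the adjustable value. -/
theorem affine_bad_instance_ratio (m : ℕ) (hm : 2 ≤ m) :
    ((((m : ℝ) - 1) / (6 * Real.sqrt m) : ℝ) : EReal) *
        zAR (badU m) (0 : Fin m → ℝ) (fun _ => (1 : ℝ)) 0 (badB m) ≤
      zAff (badU m) (0 : Fin m → ℝ) (fun _ => (1 : ℝ)) 0 (badB m) := by

  have hs0 : (0:ℝ) < Real.sqrt m := Real.sqrt_pos.2 (by positivity)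
  have hm2 : (2:ℝ) ≤ (m:ℝ) := by exact_mod_cast hm
  have hr0 : (0:ℝ) ≤ ((m : ℝ) - 1) / (6 * Real.sqrt m) := by
    apply div_nonneg <;> nlinarith
  set z := zAR (badU m) (0 : Fin m → ℝ) (fun _ => (1 : ℝ)) 0 (badB m) with hz
  have h1 : z ≤ 1 := zAR_le_one m hm
  have h0 : (0:EReal) ≤ z := zAR_nonneg m
  have hbot : z ≠ ⊥ := fun hb => by simp [hb] at h0
  have hone : (1:EReal) ≠ ⊤ := by rw [← EReal.coe_one]; exact EReal.coe_ne_top 1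
  have htop : z ≠ ⊤ := fun ht => hone (top_le_iff.1 (ht ▸ h1))
  have hzc : ((z.toReal : ℝ) : EReal) = z := EReal.coe_toReal htop hbot
  have hzt1 : z.toReal ≤ 1 := by
    have h2 := EReal.toReal_le_toReal h1 hbot hone
    simpa using h2
  calc ((((m : ℝ) - 1) / (6 * Real.sqrt m) : ℝ) : EReal) * z
      = ((((m : ℝ) - 1) / (6 * Real.sqrt m) * z.toReal : ℝ) : EReal) := by
        rw [EReal.coe_mul, hzc]
    _ ≤ ((((m : ℝ) - 1) / (6 * Real.sqrt m) : ℝ) : EReal) := by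
        rw [EReal.coe_le_coe_iff]
        calc ((m : ℝ) - 1) / (6 * Real.sqrt m) * z.toReal
            ≤ ((m : ℝ) - 1) / (6 * Real.sqrt m) * 1 :=
              mul_le_mul_of_nonneg_left hzt1 hr0
          _ = ((m : ℝ) - 1) / (6 * Real.sqrt m) := mul_one _
    _ ≤ zAff (badU m) (0 : Fin m → ℝ) (fun _ => (1 : ℝ)) 0 (badB m) := ratio_le_zAff m hm
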